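/- Let D be a non-trivial (v,b,r,k,λ)-BIBD. Then in the flag-graph Γ₁(D) there exist two distinct non-adjacent vertices with no common neighbour, and there exist two distinct non-adjacent vertices with exactly one common neighbour. Moreover, if λ ≥ 2, then there exist two distinct non-adjacent vertices with exactly two common neighbours. -/

import Mathlib

/-- A `(v,b,r,k,lam)`-balanced incomplete block design: a finite set of `v` points and a
family of `b` distinct blocks, each block a `k`-element subset of the points with
`1 < k < v`, such that every point lies in exactly `r` blocks and every pair of distinct
points is contained in exactly `lam` blocks (all parameters positive). -/
structure BIBD (v b r k lam : ℕ) where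
  P : Type
  [fintypeP : Fintype P]
  [decEqP : DecidableEq P]
  blocks : Finset (Finset P)
  card_points : Fintype.card P = v
  card_blocks : blocks.card = b
  block_size : ∀ c ∈ blocks, c.card = k
  one_lt_k : 1 < k
  k_lt_v : k < v
  lam_pos : 0 < lam
  point_deg : ∀ p : P, (blocks.filter (fun c => p ∈ c)).card = r
  pair_deg : ∀ p q : P, p ≠ q → (blocks.filter (fun c => p ∈ c ∧ q ∈ c)).card = lam

attribute [instance] BIBD.fintypeP BIBD.decEqP

variable {v b r k lam : ℕ}

/-- A flag of a BIBD: an incident point-block pair `(p, c)` with `p ∈ c`. -/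
def BIBD.Flag (D : BIBD v b r k lam) : Type :=
  {pc : D.P × Finset D.P // pc.2 ∈ D.blocks ∧ pc.1 ∈ pc.2}

instance (D : BIBD v b r k lam) : Fintype D.Flag :=
  inferInstanceAs (Fintype {pc : D.P × Finset D.P // pc.2 ∈ D.blocks ∧ pc.1 ∈ pc.2})

instance (D : BIBD v b r k lam) : DecidableEq D.Flag :=
  inferInstanceAs (DecidableEq {pc : D.P × Finset D.P // pc.2 ∈ D.blocks ∧ pc.1 ∈ pc.2})

/-- The flag-graph `Γ₁(D)`: vertices are the flags of `D`; two distinct flags `(p,c)` and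
`(q,d)` are adjacent iff `p = q` or `c = d`. -/
def BIBD.Gamma1 (D : BIBD v b r k lam) : SimpleGraph D.Flag where
  Adj x y := x ≠ y ∧ (x.1.1 = y.1.1 ∨ x.1.2 = y.1.2)
  symm := ⟨fun _ _ h => ⟨h.1.symm, h.2.imp Eq.symm Eq.symm⟩⟩
  loopless := ⟨fun _ h => h.1 rfl⟩

instance (D : BIBD v b r k lam) : DecidableRel D.Gamma1.Adj :=
  fun x y => inferInstanceAs (Decidable (x ≠ y ∧ (x.1.1 = y.1.1 ∨ x.1.2 = y.1.2)))

section Aux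

variable {v b r k lam : ℕ}

lemma BIBD.mem_common_iff (D : BIBD v b r k lam) (x y z : D.Flag)
    (hp : x.1.1 ≠ y.1.1) (hc : x.1.2 ≠ y.1.2) :
    z ∈ D.Gamma1.neighborFinset x ∩ D.Gamma1.neighborFinset y ↔
      (z.1.1 = x.1.1 ∧ z.1.2 = y.1.2) ∨ (z.1.1 = y.1.1 ∧ z.1.2 = x.1.2) := by
  simp only [Finset.mem_inter, SimpleGraph.mem_neighborFinset]
  simp only [BIBD.Gamma1, ne_eq]
  constructor
  · rintro ⟨⟨hzx, h1 | h1⟩, hzy, h2 | h2⟩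
    · exact absurd (h1.trans h2.symm) hp
    · exact Or.inl ⟨h1.symm, h2.symm⟩
    · exact Or.inr ⟨h2.symm, h1.symm⟩
    · exact absurd (h1.trans h2.symm) hc
  · rintro (⟨h1, h2⟩ | ⟨h1, h2⟩)
    · refine ⟨⟨?_, Or.inl h1.symm⟩, ?_, Or.inr h2.symm⟩
      · intro hxz; exact hc (by rw [hxz]; exact h2)
      · intro hyz; exact hp (by rw [hyz]; exact h1.symm)
    · refine ⟨⟨?_, Or.inr h2.symm⟩, ?_, Or.inl h1.symm⟩
      · intro hxz; exact hp (by rw [hxz]; exact h1)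
      · intro hyz; exact hc (by rw [hyz]; exact h2.symm)

lemma BIBD.not_adj (D : BIBD v b r k lam) {x y : D.Flag}
    (hp : x.1.1 ≠ y.1.1) (hc : x.1.2 ≠ y.1.2) : ¬ D.Gamma1.Adj x y := by
  rintro ⟨-, h | h⟩
  exacts [hp h, hc h]

lemma BIBD.exists_block_pair (D : BIBD v b r k lam) {p q : D.P} (hpq : p ≠ q) :
    ∃ c ∈ D.blocks, p ∈ c ∧ q ∈ c := by
  have h := D.pair_deg p q hpq
  have : (D.blocks.filter (fun c => p ∈ c ∧ q ∈ c)).Nonempty := by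
    rw [← Finset.card_pos, h]; exact D.lam_pos
  obtain ⟨c, hc⟩ := this
  rw [Finset.mem_filter] at hc
  exact ⟨c, hc.1, hc.2⟩

lemma BIBD.exists_two_outside (D : BIBD v b r k lam) (hnt : 1 < v - k)
    {c : Finset D.P} (hc : c ∈ D.blocks) :
    ∃ s t : D.P, s ≠ t ∧ s ∉ c ∧ t ∉ c := by
  have hcard : 1 < cᶜ.card := by
    rw [Finset.card_compl, D.block_size c hc, D.card_points]; exact hnt
  obtain ⟨s, hs, t, ht, hst⟩ := Finset.one_lt_card.mp hcard
  exact ⟨s, t, hst, Finset.mem_compl.mp hs, Finset.mem_compl.mp ht⟩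

lemma BIBD.exists_sdiff (D : BIBD v b r k lam) {c d : Finset D.P}
    (hc : c ∈ D.blocks) (hd : d ∈ D.blocks) (hcd : c ≠ d) :
    ∃ p ∈ c, p ∉ d := by
  by_contra h
  push_neg at h
  exact hcd (Finset.eq_of_subset_of_card_le (fun a ha => h a ha)
    (by rw [D.block_size c hc, D.block_size d hd]))

end Aux
/-- In the flag-graph of a non-trivial BIBD there are distinct non-adjacent vertices with
no common neighbour, and distinct non-adjacent vertices with exactly one common neighbour;
if `λ ≥ 2` there are also distinct non-adjacent vertices with exactly two common
neighbours. -/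
theorem flagGraph_nonadjacent_common_neighbours_exist (D : BIBD v b r k lam)
    (hnt : 1 < v - k) :
    (∃ x y : D.Flag, x ≠ y ∧ ¬ D.Gamma1.Adj x y ∧
      (D.Gamma1.neighborFinset x ∩ D.Gamma1.neighborFinset y).card = 0) ∧
    (∃ x y : D.Flag, x ≠ y ∧ ¬ D.Gamma1.Adj x y ∧
      (D.Gamma1.neighborFinset x ∩ D.Gamma1.neighborFinset y).card = 1) ∧
    (2 ≤ lam → ∃ x y : D.Flag, x ≠ y ∧ ¬ D.Gamma1.Adj x y ∧
      (D.Gamma1.neighborFinset x ∩ D.Gamma1.neighborFinset y).card = 2) := by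
  have hP : 1 < Fintype.card D.P := by
    rw [D.card_points]
    have h1 := D.one_lt_k; have h2 := D.k_lt_v; omega
  obtain ⟨p0, q0, hpq⟩ := Fintype.exists_pair_of_one_lt_card hP
  obtain ⟨c, hcB, hp0c, hq0c⟩ := D.exists_block_pair hpq
  obtain ⟨s, t, hst, hsc, htc⟩ := D.exists_two_outside hnt hcB
  refine ⟨?_, ?_, ?_⟩
  · -- zero common neighbours
    obtain ⟨d, hdB, hsd, htd⟩ := D.exists_block_pair hst
    have hcd : c ≠ d := fun h => hsc (h ▸ hsd)
    obtain ⟨p, hpc, hpd⟩ := D.exists_sdiff hcB hdB hcd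
    have hps : p ≠ s := fun h => hsc (h ▸ hpc)
    refine ⟨⟨(p, c), hcB, hpc⟩, ⟨(s, d), hdB, hsd⟩, ?_, ?_, ?_⟩
    · exact fun h => hps (congrArg (fun z : D.Flag => z.1.1) h)
    · exact D.not_adj hps hcd
    · rw [Finset.card_eq_zero, Finset.eq_empty_iff_forall_notMem]
      intro z hz
      rcases (D.mem_common_iff _ _ z hps hcd).mp hz with ⟨h1, h2⟩ | ⟨h1, h2⟩
      · have := z.2.2; rw [h1, h2] at this; exact hpd this
      · have := z.2.2; rw [h1, h2] at this; exact hsc this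
  · -- one common neighbour
    have hp0s : p0 ≠ s := fun h => hsc (h ▸ hp0c)
    obtain ⟨d, hdB, hp0d, hsd⟩ := D.exists_block_pair hp0s
    have hcd : c ≠ d := fun h => hsc (h ▸ hsd)
    obtain ⟨p, hpc, hpd⟩ := D.exists_sdiff hcB hdB hcd
    have hpp0 : p ≠ p0 := fun h => hpd (h ▸ hp0d)
    refine ⟨⟨(p, c), hcB, hpc⟩, ⟨(p0, d), hdB, hp0d⟩, ?_, ?_, ?_⟩
    · exact fun h => hpp0 (congrArg (fun z : D.Flag => z.1.1) h)
    · exact D.not_adj hpp0 hcd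
    · rw [Finset.card_eq_one]
      refine ⟨⟨(p0, c), hcB, hp0c⟩, Finset.eq_singleton_iff_unique_mem.mpr ⟨?_, ?_⟩⟩
      · exact (D.mem_common_iff _ _ _ hpp0 hcd).mpr (Or.inr ⟨rfl, rfl⟩)
      · intro z hz
        rcases (D.mem_common_iff _ _ z hpp0 hcd).mp hz with ⟨h1, h2⟩ | ⟨h1, h2⟩
        · exfalso; have := z.2.2; rw [h1, h2] at this; exact hpd this
        · exact Subtype.ext (Prod.ext h1 h2)
  · -- two common neighbours
    intro hlam
    have hcard : 1 < (D.blocks.filter (fun c => p0 ∈ c ∧ q0 ∈ c)).card := by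
      rw [D.pair_deg p0 q0 hpq]; exact hlam
    obtain ⟨c', hc', d', hd', hcd⟩ := Finset.one_lt_card.mp hcard
    rw [Finset.mem_filter] at hc' hd'
    obtain ⟨hc'B, hp0c', hq0c'⟩ := hc'
    obtain ⟨hd'B, hp0d', hq0d'⟩ := hd'
    refine ⟨⟨(p0, c'), hc'B, hp0c'⟩, ⟨(q0, d'), hd'B, hq0d'⟩, ?_, ?_, ?_⟩
    · exact fun h => hpq (congrArg (fun z : D.Flag => z.1.1) h)
    · exact D.not_adj hpq hcd
    · rw [Finset.card_eq_two]
      refine ⟨⟨(p0, d'), hd'B, hp0d'⟩, ⟨(q0, c'), hc'B, hq0c'⟩, ?_, ?_⟩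
      · exact fun h => hpq (congrArg (fun z : D.Flag => z.1.1) h)
      · apply Finset.ext; intro z
        refine (D.mem_common_iff ⟨(p0, c'), hc'B, hp0c'⟩ ⟨(q0, d'), hd'B, hq0d'⟩ z hpq hcd).trans ?_
        refine Iff.trans ?_ (Finset.mem_insert.trans (or_congr_right Finset.mem_singleton)).symm
        constructor
        · rintro (⟨h1, h2⟩ | ⟨h1, h2⟩)
          · exact Or.inl (Subtype.ext (Prod.ext h1 h2))
          · exact Or.inr (Subtype.ext (Prod.ext h1 h2))
        · rintro (rfl | rfl)
          · exact Or.inl ⟨rfl, rfl⟩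
          · exact Or.inr ⟨rfl, rfl⟩
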